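/- Let F : ℝⁿ × (0,∞) → ℂ be a measurable function and μ a positive measure on ℝⁿ × (0,∞). Suppose the Carleson norm ‖μ‖_C := sup over cubes R ⊂ ℝⁿ of |R|^{-1} μ(R × (0, ℓ(R))) is finite, and that the nontangential maximal function N F(x) := sup_{|x−y|<t} |F(y,t)| is integrable over ℝⁿ. Then |∫_{ℝⁿ×(0,∞)} F dμ| ≤ C_n ‖μ‖_C ∫_{ℝⁿ} N F(x) dx. -/

import Mathlib

open MeasureTheory

/-- Carleson's embedding lemma.  If `μ` is a measure on the upper
half-space with Carleson norm at most `A` (tested on all cubes `R × (0, ℓ(R))`),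
`F` is measurable, and `NF` is an integrable majorant of the nontangential maximal
function of `F`, then `|∫ F dμ| ≤ C_n · A · ∫ NF`. -/
theorem stmt_3 (n : ℕ) :
    ∃ C : ℝ, 0 < C ∧
      ∀ (F : (Fin n → ℝ) × ℝ → ℂ) (μ : Measure ((Fin n → ℝ) × ℝ))
        (A : ℝ) (NF : (Fin n → ℝ) → ℝ),
        0 ≤ A →
        Measurable F →
        μ {p : (Fin n → ℝ) × ℝ | p.2 ≤ 0} = 0 →
        -- Carleson norm bound: μ(R × (0, ℓ(R))) ≤ A |R| for every cube R
        (∀ (c : Fin n → ℝ) (L : ℝ), 0 < L →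
          μ ({x : Fin n → ℝ | ∀ i, |x i - c i| ≤ L / 2} ×ˢ Set.Ioo (0 : ℝ) L) ≤
            ENNReal.ofReal (A * L ^ n)) →
        -- NF dominates F nontangentially
        (∀ (x y : Fin n → ℝ) (t : ℝ), dist x y < t → ‖F (y, t)‖ ≤ NF x) →
        Integrable NF volume →
        ‖∫ p, F p ∂μ‖ ≤ C * A * ∫ x, NF x := by
  refine ⟨(4 : ℝ) ^ n, by positivity, ?_⟩
  intro F μ A NF hA hF hμ0 hCar hNT hNF
  have hNF0 : ∀ x, 0 ≤ NF x := fun x =>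
    le_trans (norm_nonneg _) (hNT x x 1 (by simp))
  have hINF : (0:ℝ) ≤ ∫ x, NF x := integral_nonneg hNF0
  -- the key tent estimate
  have key : ∀ l : ℝ, 0 < l →
      μ {p : (Fin n → ℝ) × ℝ | 0 < p.2 ∧ l < ‖F p‖} ≤
        ENNReal.ofReal ((4:ℝ) ^ n * A) * volume {x | l < NF x} := by
    intro l hl
    set S := {p : (Fin n → ℝ) × ℝ | 0 < p.2 ∧ l < ‖F p‖} with hSdef
    set E := {x : Fin n → ℝ | l < NF x} with hEdef
    have hball : ∀ p ∈ S, Metric.ball p.1 p.2 ⊆ E := by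
      intro p hp x hx
      exact lt_of_lt_of_le hp.2 (hNT x p.1 p.2 (by simpa [Metric.mem_ball, dist_comm] using hx))
    have hmemE : ∀ p ∈ S, p.1 ∈ E := fun p hp =>
      hball p hp (Metric.mem_ball_self hp.1)
    rcases Nat.eq_zero_or_pos n with hn | hn
    · -- dimension 0 : the Carleson condition says μ of the upper half space is at most A
      subst hn
      by_cases hEne : S.Nonempty
      · have hEuniv : E = Set.univ := by
          obtain ⟨p, hp⟩ := hEne
          have hpE := hmemE p hp
          refine Set.eq_univ_of_forall fun x => ?_
          have : x = p.1 := funext fun i => i.elim0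
          rw [this]; exact hpE
        have hvolE : volume E = 1 := by
          rw [hEuniv, MeasureTheory.volume_pi, Measure.pi_univ]
          simp
        have hsub : S ⊆ ⋃ k : ℕ, (Set.univ ×ˢ Set.Ioo (0:ℝ) (k+1)) := by
          intro p hp
          obtain ⟨k, hk⟩ := exists_nat_gt p.2
          exact Set.mem_iUnion.2 ⟨k, Set.mem_prod.2 ⟨Set.mem_univ _,
            ⟨hp.1, lt_of_lt_of_le hk (by linarith)⟩⟩⟩
        have hcube : ∀ L : ℝ, {x : Fin 0 → ℝ | ∀ i, |x i - (0:Fin 0 → ℝ) i| ≤ L / 2} = Set.univ :=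
          fun L => Set.eq_univ_of_forall fun x i => i.elim0
        have hbound : ∀ k : ℕ, μ (Set.univ ×ˢ Set.Ioo (0:ℝ) (k+1)) ≤ ENNReal.ofReal A := by
          intro k
          have := hCar 0 (k+1) (by positivity)
          rw [hcube] at this
          simpa using this
        have hmono : Monotone fun k : ℕ => (Set.univ ×ˢ Set.Ioo (0:ℝ) (k+1) :
            Set ((Fin 0 → ℝ) × ℝ)) := by
          intro a b hab
          refine Set.prod_mono le_rfl (Set.Ioo_subset_Ioo le_rfl ?_)
          have : (a:ℝ) ≤ b := Nat.cast_le.2 hab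
          linarith
        calc μ S ≤ μ (⋃ k : ℕ, (Set.univ ×ˢ Set.Ioo (0:ℝ) (k+1))) := measure_mono hsub
          _ = ⨆ k : ℕ, μ (Set.univ ×ˢ Set.Ioo (0:ℝ) (k+1)) :=
              hmono.directed_le.measure_iUnion
          _ ≤ ENNReal.ofReal A := iSup_le hbound
          _ = ENNReal.ofReal ((4:ℝ) ^ 0 * A) * volume E := by
              rw [hvolE, mul_one]; norm_num
      · have : S = ∅ := Set.not_nonempty_iff_eq_empty.mp hEne
        rw [this]; simp
    · -- dimension ≥ 1 : Vitali covering argument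
      -- finiteness of the measure of E
      have hlintNF : ∫⁻ x, ENNReal.ofReal (NF x) < ⊤ := hNF.lintegral_lt_top
      have hmarkov : ENNReal.ofReal l * volume E ≤ ∫⁻ x, ENNReal.ofReal (NF x) := by
        refine le_trans ?_ (mul_meas_ge_le_lintegral₀
          (ENNReal.measurable_ofReal.comp_aemeasurable hNF.aemeasurable) (ENNReal.ofReal l))
        gcongr
        intro x hx
        exact ENNReal.ofReal_le_ofReal (le_of_lt hx)
      have hVfin : volume E < ⊤ := by
        by_contra h
        rw [not_lt, top_le_iff] at h
        rw [h, ENNReal.mul_top (by simp [ENNReal.ofReal_eq_zero, not_le, hl])] at hmarkov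
        exact (lt_irrefl _ (lt_of_le_of_lt hmarkov hlintNF))
      -- volume of the relevant closed balls (sup-metric cubes)
      have hvolB : ∀ p : (Fin n → ℝ) × ℝ, 0 < p.2 →
          volume (Metric.closedBall p.1 (p.2 / 2)) = ENNReal.ofReal (p.2 ^ n) := by
        intro p hp
        rw [Real.volume_pi_closedBall _ (by positivity)]
        have h2 : 2 * (p.2 / 2) = p.2 := by ring
        rw [h2, Fintype.card_fin]
      have hBsubE : ∀ p ∈ S, Metric.closedBall p.1 (p.2 / 2) ⊆ E := fun p hp =>
        le_trans (Metric.closedBall_subset_ball (by linarith [hp.1])) (hball p hp)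
      -- radii are bounded
      have hrad : ∀ p ∈ S, p.2 / 2 ≤ max 1 (volume E).toReal := by
        intro p hp
        rcases le_or_gt p.2 1 with h1 | h1
        · exact le_trans (by linarith [hp.1]) (le_max_left _ _)
        · have hb : ENNReal.ofReal (p.2 ^ n) ≤ volume E := by
            rw [← hvolB p hp.1]
            exact measure_mono (hBsubE p hp)
          have hb' : p.2 ^ n ≤ (volume E).toReal :=
            (ENNReal.ofReal_le_iff_le_toReal hVfin.ne).mp hb
          have hself : p.2 ≤ p.2 ^ n := le_self_pow₀ h1.le hn.ne'
          calc p.2 / 2 ≤ p.2 := by linarith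
            _ ≤ (volume E).toReal := le_trans hself hb'
            _ ≤ max 1 (volume E).toReal := le_max_right _ _
      -- Vitali
      obtain ⟨u, huS, hud, hcov⟩ :=
        Vitali.exists_disjoint_subfamily_covering_enlargement
          (fun p : (Fin n → ℝ) × ℝ => Metric.closedBall p.1 (p.2 / 2)) S
          (fun p => p.2 / 2) 2 one_lt_two
          (fun p hp => by have := hp.1; positivity)
          (max 1 (volume E).toReal) hrad
          (fun p hp => ⟨p.1, Metric.mem_closedBall_self (by have := hp.1; positivity)⟩)
      -- countability of u
      have hposmeas : ∀ q : u, 0 < volume (Metric.closedBall (q : (Fin n → ℝ) × ℝ).1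
          ((q : (Fin n → ℝ) × ℝ).2 / 2)) := by
        intro q
        have hq : (q : (Fin n → ℝ) × ℝ) ∈ S := huS q.2
        rw [hvolB _ hq.1]
        have := hq.1
        positivity
      have hdisj : Pairwise (Function.onFun Disjoint fun q : u =>
          Metric.closedBall (q : (Fin n → ℝ) × ℝ).1 ((q : (Fin n → ℝ) × ℝ).2 / 2)) := by
        intro i j hij
        exact hud i.2 j.2 (fun h => hij (Subtype.ext h))
      have hUsubE : (⋃ q : u, Metric.closedBall (q : (Fin n → ℝ) × ℝ).1
          ((q : (Fin n → ℝ) × ℝ).2 / 2)) ⊆ E :=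
        Set.iUnion_subset fun q => hBsubE _ (huS q.2)
      have hucount : u.Countable := by
        have h := MeasureTheory.Measure.countable_meas_pos_of_disjoint_of_meas_iUnion_ne_top
          (volume : Measure (Fin n → ℝ))
          (As := fun q : u => Metric.closedBall (q : (Fin n → ℝ) × ℝ).1
            ((q : (Fin n → ℝ) × ℝ).2 / 2))
          (fun q => Metric.isClosed_closedBall.measurableSet)
          hdisj
          (ne_top_of_le_ne_top hVfin.ne (measure_mono hUsubE))
        have heq : {i : u | 0 < volume (Metric.closedBall (i : (Fin n → ℝ) × ℝ).1
            ((i : (Fin n → ℝ) × ℝ).2 / 2))} = Set.univ :=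
          Set.eq_univ_of_forall fun q => hposmeas q
        rw [heq] at h
        have : Countable u := Set.countable_univ_iff.mp h
        exact Set.countable_coe_iff.mp this
      -- covering of S by Carleson boxes over the chosen balls
      have hcover : S ⊆ ⋃ q ∈ u,
          ({x : Fin n → ℝ | ∀ i, |x i - q.1 i| ≤ 4 * q.2 / 2} ×ˢ Set.Ioo (0:ℝ) (4 * q.2)) := by
        intro p hp
        obtain ⟨q, hqu, ⟨z, hz1, hz2⟩, hle⟩ := hcov p hp
        have hq : q ∈ S := huS hqu
        have hq2 : 0 < q.2 := hq.1
        have hdist : dist p.1 q.1 ≤ p.2 / 2 + q.2 / 2 := by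
          calc dist p.1 q.1 ≤ dist p.1 z + dist z q.1 := dist_triangle _ _ _
            _ ≤ p.2 / 2 + q.2 / 2 := by
                have h1 : dist p.1 z ≤ p.2 / 2 := by
                  rw [dist_comm]; exact Metric.mem_closedBall.mp hz1
                have h2 : dist z q.1 ≤ q.2 / 2 := Metric.mem_closedBall.mp hz2
                linarith
        have hp2 : p.2 ≤ 2 * q.2 := by linarith [hle]
        refine Set.mem_biUnion hqu ?_
        refine Set.mem_prod.2 ⟨?_, ⟨hp.1, by linarith⟩⟩
        intro i
        have hi : dist (p.1 i) (q.1 i) ≤ dist p.1 q.1 := dist_le_pi_dist p.1 q.1 i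
        rw [Real.dist_eq] at hi
        have : dist p.1 q.1 ≤ 2 * q.2 := by linarith
        calc |p.1 i - q.1 i| ≤ dist p.1 q.1 := hi
          _ ≤ 4 * q.2 / 2 := by linarith
      -- summing up
      have hsum : ∑' q : u, ENNReal.ofReal ((q : (Fin n → ℝ) × ℝ).2 ^ n) ≤ volume E := by
        have heq : ∀ q : u, ENNReal.ofReal ((q : (Fin n → ℝ) × ℝ).2 ^ n) =
            volume (Metric.closedBall (q : (Fin n → ℝ) × ℝ).1
              ((q : (Fin n → ℝ) × ℝ).2 / 2)) := fun q => (hvolB _ (huS q.2).1).symm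
        calc ∑' q : u, ENNReal.ofReal ((q : (Fin n → ℝ) × ℝ).2 ^ n)
            = ∑' q : u, volume (Metric.closedBall (q : (Fin n → ℝ) × ℝ).1
              ((q : (Fin n → ℝ) × ℝ).2 / 2)) := tsum_congr heq
          _ ≤ volume (⋃ q : u, Metric.closedBall (q : (Fin n → ℝ) × ℝ).1
              ((q : (Fin n → ℝ) × ℝ).2 / 2)) :=
              tsum_meas_le_meas_iUnion_of_disjoint _ (fun q => Metric.isClosed_closedBall.measurableSet)
                hdisj
          _ ≤ volume E := measure_mono hUsubE
      calc μ S ≤ μ (⋃ q ∈ u,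
            ({x : Fin n → ℝ | ∀ i, |x i - q.1 i| ≤ 4 * q.2 / 2} ×ˢ Set.Ioo (0:ℝ) (4 * q.2))) :=
            measure_mono hcover
        _ ≤ ∑' q : u, μ (({x : Fin n → ℝ | ∀ i, |x i - (q : (Fin n → ℝ) × ℝ).1 i| ≤
              4 * (q : (Fin n → ℝ) × ℝ).2 / 2} ×ˢ
              Set.Ioo (0:ℝ) (4 * (q : (Fin n → ℝ) × ℝ).2))) :=
            measure_biUnion_le μ hucount _
        _ ≤ ∑' q : u, ENNReal.ofReal (A * (4 * (q : (Fin n → ℝ) × ℝ).2) ^ n) :=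
            ENNReal.tsum_le_tsum fun q => hCar (q : (Fin n → ℝ) × ℝ).1
              (4 * (q : (Fin n → ℝ) × ℝ).2) (by linarith [(huS q.2).1])
        _ = ∑' q : u, ENNReal.ofReal ((4:ℝ) ^ n * A) *
              ENNReal.ofReal ((q : (Fin n → ℝ) × ℝ).2 ^ n) := by
            refine tsum_congr fun q => ?_
            rw [← ENNReal.ofReal_mul (by positivity)]
            congr 1
            rw [mul_pow]
            ring
        _ = ENNReal.ofReal ((4:ℝ) ^ n * A) *
              ∑' q : u, ENNReal.ofReal ((q : (Fin n → ℝ) × ℝ).2 ^ n) := ENNReal.tsum_mul_left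
        _ ≤ ENNReal.ofReal ((4:ℝ) ^ n * A) * volume E := by gcongr
  -- layer cake on both sides
  have hlc1 : ∫⁻ p, ENNReal.ofReal ‖F p‖ ∂μ = ∫⁻ t in Set.Ioi 0, μ {p | t < ‖F p‖} :=
    lintegral_eq_lintegral_meas_lt μ (ae_of_all _ fun p => norm_nonneg _)
      hF.norm.aemeasurable
  have hlc2 : ∫⁻ x, ENNReal.ofReal (NF x) = ∫⁻ t in Set.Ioi 0, volume {x | t < NF x} :=
    lintegral_eq_lintegral_meas_lt volume (ae_of_all _ hNF0) hNF.aemeasurable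
  have hmain : ∫⁻ p, ENNReal.ofReal ‖F p‖ ∂μ ≤
      ENNReal.ofReal ((4:ℝ) ^ n * A) * ENNReal.ofReal (∫ x, NF x) := by
    rw [hlc1]
    have hstep : ∀ t ∈ Set.Ioi (0:ℝ), μ {p : (Fin n → ℝ) × ℝ | t < ‖F p‖} ≤
        ENNReal.ofReal ((4:ℝ) ^ n * A) * volume {x | t < NF x} := by
      intro t ht
      have hsub : {p : (Fin n → ℝ) × ℝ | t < ‖F p‖} ⊆
          {p : (Fin n → ℝ) × ℝ | 0 < p.2 ∧ t < ‖F p‖} ∪ {p : (Fin n → ℝ) × ℝ | p.2 ≤ 0} := by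
        intro p hp
        by_cases h : 0 < p.2
        · exact Or.inl ⟨h, hp⟩
        · exact Or.inr (le_of_not_gt h)
      calc μ {p : (Fin n → ℝ) × ℝ | t < ‖F p‖}
          ≤ μ ({p : (Fin n → ℝ) × ℝ | 0 < p.2 ∧ t < ‖F p‖}) + μ {p : (Fin n → ℝ) × ℝ | p.2 ≤ 0} :=
            le_trans (measure_mono hsub) (measure_union_le _ _)
        _ = μ {p : (Fin n → ℝ) × ℝ | 0 < p.2 ∧ t < ‖F p‖} := by rw [hμ0, add_zero]
        _ ≤ ENNReal.ofReal ((4:ℝ) ^ n * A) * volume {x | t < NF x} := key t ht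
    calc ∫⁻ t in Set.Ioi 0, μ {p : (Fin n → ℝ) × ℝ | t < ‖F p‖}
        ≤ ∫⁻ t in Set.Ioi 0, ENNReal.ofReal ((4:ℝ) ^ n * A) * volume {x | t < NF x} :=
          setLIntegral_mono' measurableSet_Ioi hstep
      _ = ENNReal.ofReal ((4:ℝ) ^ n * A) * ∫⁻ t in Set.Ioi 0, volume {x | t < NF x} :=
          lintegral_const_mul' _ _ ENNReal.ofReal_ne_top
      _ = ENNReal.ofReal ((4:ℝ) ^ n * A) * ENNReal.ofReal (∫ x, NF x) := by
          rw [← hlc2, ← ofReal_integral_eq_lintegral_ofReal hNF (ae_of_all _ hNF0)]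
  have hfin : ENNReal.ofReal ((4:ℝ) ^ n * A) * ENNReal.ofReal (∫ x, NF x) ≠ ⊤ :=
    ENNReal.mul_ne_top ENNReal.ofReal_ne_top ENNReal.ofReal_ne_top
  calc ‖∫ p, F p ∂μ‖ ≤ ∫ p, ‖F p‖ ∂μ := norm_integral_le_integral_norm _
    _ = (∫⁻ p, ENNReal.ofReal ‖F p‖ ∂μ).toReal :=
        integral_eq_lintegral_of_nonneg_ae (ae_of_all _ fun p => norm_nonneg _)
          hF.norm.aestronglyMeasurable
    _ ≤ (ENNReal.ofReal ((4:ℝ) ^ n * A) * ENNReal.ofReal (∫ x, NF x)).toReal :=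
        ENNReal.toReal_mono hfin hmain
    _ = (4:ℝ) ^ n * A * ∫ x, NF x := by
        rw [← ENNReal.ofReal_mul (mul_nonneg (by positivity) hA),
          ENNReal.toReal_ofReal (mul_nonneg (mul_nonneg (by positivity) hA) hINF)]
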